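/- The cone of finite Borel measures on the compact space X = {1/n : n ∈ ℕ, n ≥ 1} ∪ {0} is linearly homeomorphic to the closed sub-cone of ℝ₊^ℕ (with product topology) consisting of all nonincreasing sequences x₁ ≥ x₂ ≥ x₃ ≥ … ≥ 0. -/

import Mathlib

open MeasureTheory Filter Topology Set

/-- The space `{1/n : n ≥ 1} ∪ {0}` as a subset of `ℝ`. -/
def Xspace : Set ℝ := {x : ℝ | x = 0 ∨ ∃ n : ℕ, x = 1 / (n + 1)}

namespace XAux

/-- the point 1/(n+1) -/
noncomputable def pt (n : ℕ) : Xspace := ⟨1 / (n + 1), Or.inr ⟨n, rfl⟩⟩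

/-- the point 0 -/
noncomputable def zp : Xspace := ⟨0, Or.inl rfl⟩

lemma val_nonneg (p : Xspace) : 0 ≤ p.1 := by
  rcases p.2 with h | ⟨n, h⟩ <;> rw [h] <;> positivity

lemma eq_zp_or_pt (p : Xspace) : p = zp ∨ ∃ n, p = pt n := by
  rcases p.2 with h | ⟨n, h⟩
  · exact Or.inl (Subtype.ext h)
  · exact Or.inr ⟨n, Subtype.ext h⟩

lemma pt_injective : Function.Injective pt := by
  intro m n h
  have : (1 : ℝ) / (m + 1) = 1 / (n + 1) := congrArg Subtype.val h
  have hm : (0:ℝ) < m + 1 := by positivity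
  have hn : (0:ℝ) < n + 1 := by positivity
  field_simp at this
  have h' : (m:ℝ) = n := by linarith
  exact_mod_cast h'

lemma pt_ne_zp (n : ℕ) : pt n ≠ zp := by
  intro h
  have : (1 : ℝ) / (n + 1) = 0 := congrArg Subtype.val h
  have : (0:ℝ) < 1 / (n+1) := by positivity
  linarith

/-- tail sets -/
def T (n : ℕ) : Set Xspace := {p : Xspace | p.1 ≤ 1 / (n + 1)}

lemma zp_mem_T (n : ℕ) : zp ∈ T n := by
  show (0:ℝ) ≤ 1 / (n+1); positivity

lemma pt_mem_T_iff {m n : ℕ} : pt m ∈ T n ↔ n ≤ m := by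
  show (1:ℝ) / (m + 1) ≤ 1 / (n + 1) ↔ n ≤ m
  rw [div_le_div_iff₀ (by positivity) (by positivity)]
  constructor
  · intro h
    have : (n:ℝ) ≤ m := by linarith
    exact_mod_cast this
  · intro h
    have : (n:ℝ) ≤ m := by exact_mod_cast h
    linarith

lemma mem_T_iff {p : Xspace} {n : ℕ} : p ∈ T n ↔ p = zp ∨ ∃ m, n ≤ m ∧ p = pt m := by
  constructor
  · intro hp
    rcases eq_zp_or_pt p with h | ⟨m, h⟩
    · exact Or.inl h
    · subst h; exact Or.inr ⟨m, pt_mem_T_iff.mp hp, rfl⟩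
  · rintro (h | ⟨m, hm, h⟩)
    · subst h; exact zp_mem_T n
    · subst h; exact pt_mem_T_iff.mpr hm

lemma T_antitone : Antitone T := by
  apply antitone_nat_of_succ_le
  intro n
  intro p hp
  simp only [T, mem_setOf_eq] at hp ⊢
  push_cast at hp ⊢
  refine le_trans hp ?_
  apply one_div_le_one_div_of_le (by positivity)
  linarith

lemma isClosed_T (n : ℕ) : IsClosed (T n) :=
  isClosed_le continuous_subtype_val continuous_const

lemma isClopen_T (n : ℕ) : IsClopen (T n) := by
  refine ⟨isClosed_T n, ?_⟩
  rw [← isClosed_compl_iff]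
  have : (T n)ᶜ = pt '' {m | m < n} := by
    ext p
    simp only [mem_compl_iff, mem_image, mem_setOf_eq]
    constructor
    · intro hp
      rcases eq_zp_or_pt p with h | ⟨m, h⟩
      · exact absurd (h ▸ zp_mem_T n) hp
      · subst h
        refine ⟨m, ?_, rfl⟩
        by_contra hmn
        exact hp (pt_mem_T_iff.mpr (le_of_not_gt hmn))
    · rintro ⟨m, hm, rfl⟩
      intro hmem
      exact absurd (pt_mem_T_iff.mp hmem) (not_le.mpr hm)
  rw [this]
  exact (Set.Finite.image _ (Set.finite_Iio n)).isClosed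

lemma measurableSet_T (n : ℕ) : MeasurableSet (T n) := (isClosed_T n).measurableSet

lemma iInter_T : ⋂ n, T n = {zp} := by
  ext p
  simp only [mem_iInter, mem_singleton_iff]
  constructor
  · intro h
    have h0 : p.1 ≤ 0 := by
      by_contra hpos
      push_neg at hpos
      obtain ⟨n, hn⟩ := exists_nat_one_div_lt hpos
      exact absurd (h n) (not_le.mpr hn)
    exact Subtype.ext (le_antisymm h0 (val_nonneg p))
  · rintro rfl n; exact zp_mem_T n

instance : Countable Xspace := by
  have : Xspace ⊆ insert 0 (Set.range fun n : ℕ => (1:ℝ) / (n+1)) := by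
    rintro x (h | ⟨n, h⟩)
    · exact h ▸ Set.mem_insert _ _
    · exact Set.mem_insert_of_mem _ ⟨n, h.symm⟩
  exact ((Set.countable_range _).insert 0).mono this |>.to_subtype

lemma tendsto_pt : Tendsto pt atTop (𝓝 zp) := by
  rw [tendsto_subtype_rng]
  show Tendsto (fun n : ℕ => (1:ℝ) / (n+1)) atTop (𝓝 (0:ℝ))
  simpa using tendsto_one_div_add_atTop_nhds_zero_nat (𝕜 := ℝ)

end XAux

namespace XAux

open scoped ENNReal NNReal

/-- the limit (infimum) of a sequence -/
noncomputable def Lim (x : ℕ → ℝ≥0) : ℝ≥0 := ⨅ n, x n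

/-- successive differences -/
noncomputable def dd (x : ℕ → ℝ≥0) (n : ℕ) : ℝ≥0 := x n - x (n + 1)

variable {x : ℕ → ℝ≥0}

lemma anti (hx : ∀ n, x (n + 1) ≤ x n) : Antitone x :=
  antitone_nat_of_succ_le hx

lemma Lim_le (n : ℕ) : Lim x ≤ x n := ciInf_le (OrderBot.bddBelow _) n

lemma tendsto_Lim (hx : ∀ n, x (n + 1) ≤ x n) : Tendsto x atTop (𝓝 (Lim x)) :=
  tendsto_atTop_ciInf (anti hx) (OrderBot.bddBelow _)

lemma sum_dd_range (hx : ∀ n, x (n + 1) ≤ x n) (k N : ℕ) :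
    ∑ m ∈ Finset.range N, dd x (k + m) = x k - x (k + N) := by
  induction N with
  | zero => simp
  | succ N ih =>
      rw [Finset.sum_range_succ, ih, dd, ← add_assoc]
      exact tsub_add_tsub_cancel ((anti hx) (Nat.le_add_right k N)) (hx (k + N))

lemma tsum_dd_ennreal (hx : ∀ n, x (n + 1) ≤ x n) (k : ℕ) :
    ∑' m, (dd x (k + m) : ℝ≥0∞) = ((x k - Lim x : ℝ≥0) : ℝ≥0∞) := by
  have h1 : Tendsto (fun N => ∑ m ∈ Finset.range N, (dd x (k + m) : ℝ≥0∞)) atTop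
      (𝓝 (∑' m, (dd x (k + m) : ℝ≥0∞))) := ENNReal.tendsto_nat_tsum _
  have h2 : Tendsto (fun N => ∑ m ∈ Finset.range N, (dd x (k + m) : ℝ≥0∞)) atTop
      (𝓝 (((x k - Lim x : ℝ≥0) : ℝ≥0∞))) := by
    have hsum : (fun N => ∑ m ∈ Finset.range N, (dd x (k + m) : ℝ≥0∞))
        = fun N => ((x k - x (k + N) : ℝ≥0) : ℝ≥0∞) := by
      funext N
      rw [← ENNReal.coe_finset_sum, sum_dd_range hx]
    rw [hsum]
    have hxk : Tendsto (fun N => x (k + N)) atTop (𝓝 (Lim x)) := by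
      have := tendsto_Lim hx
      exact this.comp (tendsto_atTop_atTop_of_monotone (fun a b h => by omega)
        (fun b => ⟨b, Nat.le_add_left b k⟩))
    have : Tendsto (fun N => x k - x (k + N)) atTop (𝓝 (x k - Lim x)) :=
      Tendsto.sub tendsto_const_nhds hxk
    exact (ENNReal.continuous_coe.tendsto _).comp this
  exact tendsto_nhds_unique h1 h2

/-- the inverse map, as a measure -/
noncomputable def nu (x : ℕ → ℝ≥0) : Measure Xspace :=
  Measure.sum (fun n => (dd x n : ℝ≥0∞) • Measure.dirac (pt n))
    + (Lim x : ℝ≥0∞) • Measure.dirac zp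

lemma nu_apply_T (hx : ∀ n, x (n + 1) ≤ x n) (k : ℕ) : nu x (T k) = (x k : ℝ≥0∞) := by
  rw [nu, Measure.add_apply, Measure.sum_apply _ (measurableSet_T k)]
  have h1 : ∀ n, ((dd x n : ℝ≥0∞) • Measure.dirac (pt n)) (T k)
      = if k ≤ n then (dd x n : ℝ≥0∞) else 0 := by
    intro n
    rw [Measure.smul_apply, smul_eq_mul]
    by_cases h : k ≤ n
    · rw [if_pos h, Measure.dirac_apply_of_mem (pt_mem_T_iff.mpr h), mul_one]
    · rw [if_neg h, Measure.dirac_apply' _ (measurableSet_T k),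
        Set.indicator_of_notMem (fun hm => h (pt_mem_T_iff.mp hm)), mul_zero]
  have h2 : ((Lim x : ℝ≥0∞) • Measure.dirac zp) (T k) = (Lim x : ℝ≥0∞) := by
    rw [Measure.smul_apply, smul_eq_mul, Measure.dirac_apply_of_mem (zp_mem_T k), mul_one]
  simp_rw [h1, h2]
  have h3 : ∑' n, (if k ≤ n then (dd x n : ℝ≥0∞) else 0) = ∑' m, (dd x (k + m) : ℝ≥0∞) := by
    rw [← Summable.sum_add_tsum_nat_add' (f := fun n => if k ≤ n then (dd x n : ℝ≥0∞) else 0)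
      (k := k) ENNReal.summable]
    have hz : ∀ i ∈ Finset.range k, (if k ≤ i then (dd x i : ℝ≥0∞) else 0) = 0 := by
      intro i hi
      rw [if_neg (by simpa using Finset.mem_range.mp hi)]
    rw [Finset.sum_eq_zero hz, zero_add]
    congr 1
    funext m
    rw [if_pos (Nat.le_add_left k m), add_comm m k]
  rw [h3, tsum_dd_ennreal hx k, ← ENNReal.coe_add, tsub_add_cancel_of_le (Lim_le k)]

end XAux

namespace XAux

open scoped ENNReal NNReal

example : MeasurableSingletonClass Xspace := by infer_instance

lemma T_zero : T 0 = Set.univ := by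
  ext p
  simp only [Set.mem_univ, iff_true]
  show p.1 ≤ 1 / ((0:ℕ) + 1)
  rcases p.2 with h | ⟨n, h⟩
  · rw [h]; norm_num
  · rw [h]; push_cast
    rw [div_le_div_iff₀ (by positivity) (by norm_num)]
    norm_num

variable {x : ℕ → ℝ≥0}

instance isFiniteMeasure_nu (x : {x : ℕ → ℝ≥0 // ∀ n, x (n + 1) ≤ x n}) :
    IsFiniteMeasure (nu x.1) := by
  constructor
  rw [← T_zero, nu_apply_T x.2]
  exact ENNReal.coe_lt_top

/-- the inverse map as a finite measure -/
noncomputable def psi (x : {x : ℕ → ℝ≥0 // ∀ n, x (n + 1) ≤ x n}) : FiniteMeasure Xspace :=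
  ⟨nu x.1, isFiniteMeasure_nu x⟩

/-- the forward map -/
noncomputable def phi (μ : FiniteMeasure Xspace) : {x : ℕ → ℝ≥0 // ∀ n, x (n + 1) ≤ x n} :=
  ⟨fun n => μ (T n), fun n => μ.apply_mono (T_antitone (Nat.le_succ n))⟩

lemma phi_psi (x : {x : ℕ → ℝ≥0 // ∀ n, x (n + 1) ≤ x n}) : phi (psi x) = x := by
  apply Subtype.ext
  funext n
  show ((nu x.1 (T n)).toNNReal) = x.1 n
  rw [nu_apply_T x.2, ENNReal.toNNReal_coe]

lemma singleton_pt (n : ℕ) : {pt n} = T n \ T (n + 1) := by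
  ext p
  simp only [Set.mem_singleton_iff, Set.mem_diff]
  constructor
  · rintro rfl
    exact ⟨pt_mem_T_iff.mpr le_rfl, fun h => by simpa using pt_mem_T_iff.mp h⟩
  · rintro ⟨h1, h2⟩
    rcases mem_T_iff.mp h1 with rfl | ⟨m, hm, rfl⟩
    · exact absurd (zp_mem_T (n + 1)) h2
    · have : ¬ (n + 1 ≤ m) := fun h => h2 (pt_mem_T_iff.mpr h)
      congr
      omega

lemma measure_singleton_pt (μ : Measure Xspace) [IsFiniteMeasure μ] (n : ℕ) :
    μ {pt n} = μ (T n) - μ (T (n + 1)) := by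
  rw [singleton_pt, measure_diff (T_antitone (Nat.le_succ n)) (measurableSet_T (n+1)).nullMeasurableSet
    (measure_ne_top μ _)]

lemma measure_singleton_zp (μ : Measure Xspace) [IsFiniteMeasure μ] :
    μ {zp} = ⨅ n, μ (T n) := by
  rw [← iInter_T]
  exact Directed.measure_iInter (fun n => (measurableSet_T n).nullMeasurableSet)
    (T_antitone.directed_ge) ⟨0, measure_ne_top μ _⟩

lemma phi_injective : Function.Injective phi := by
  intro μ ν h
  have hT : ∀ n, (μ : Measure Xspace) (T n) = (ν : Measure Xspace) (T n) := by
    intro n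
    have := congrArg (fun y => (y.1 n : ℝ≥0∞)) h
    simpa only [phi, FiniteMeasure.ennreal_coeFn_eq_coeFn_toMeasure] using this
  have hsing : ∀ a : Xspace, (μ : Measure Xspace) {a} = (ν : Measure Xspace) {a} := by
    intro a
    rcases eq_zp_or_pt a with rfl | ⟨n, rfl⟩
    · rw [measure_singleton_zp, measure_singleton_zp]
      exact iInf_congr hT
    · rw [measure_singleton_pt, measure_singleton_pt, hT, hT]
  apply FiniteMeasure.toMeasure_injective
  calc (μ : Measure Xspace) = Measure.sum fun a => (μ : Measure Xspace) {a} • Measure.dirac a :=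
        (Measure.sum_smul_dirac _).symm
    _ = Measure.sum fun a => (ν : Measure Xspace) {a} • Measure.dirac a := by
        congr 1; funext a; rw [hsing]
    _ = (ν : Measure Xspace) := Measure.sum_smul_dirac _

/-- the equivalence -/
noncomputable def equiv : FiniteMeasure Xspace ≃ {x : ℕ → ℝ≥0 // ∀ n, x (n + 1) ≤ x n} where
  toFun := phi
  invFun := psi
  left_inv := fun μ => phi_injective (phi_psi (phi μ))
  right_inv := phi_psi

end XAux

namespace XAux

open scoped ENNReal NNReal BoundedContinuousFunction

/-- indicator of a clopen set as a nonnegative bounded continuous function -/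
noncomputable def indNN {s : Set Xspace} (hs : IsClopen s) : Xspace →ᵇ ℝ≥0 where
  toFun := s.indicator 1
  continuous_toFun := continuous_indicator (by simp [hs.frontier_eq]) continuous_const.continuousOn
  map_bounded' := ⟨1, fun a b => by
    by_cases ha : a ∈ s <;> by_cases hb : b ∈ s <;>
      simp [Set.indicator_of_mem, Set.indicator_of_notMem, ha, hb, dist_comm,
        NNReal.dist_eq] <;> norm_num⟩

lemma testAgainstNN_indNN (μ : FiniteMeasure Xspace) {s : Set Xspace} (hs : IsClopen s) :
    μ.testAgainstNN (indNN hs) = μ s := by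
  have : ∀ ω, ((indNN hs ω : ℝ≥0) : ℝ≥0∞) = s.indicator 1 ω := by
    intro ω
    have hrfl : (indNN hs) ω = s.indicator 1 ω := rfl
    rw [hrfl]
    by_cases hω : ω ∈ s
    · rw [Set.indicator_of_mem hω, Set.indicator_of_mem hω]; rfl
    · rw [Set.indicator_of_notMem hω, Set.indicator_of_notMem hω]; rfl
  show (∫⁻ ω, ((indNN hs ω : ℝ≥0) : ℝ≥0∞) ∂(μ : Measure Xspace)).toNNReal = μ s
  simp_rw [this]
  rw [lintegral_indicator_one hs.1.measurableSet]
  rfl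

lemma continuous_phi : Continuous phi := by
  apply Continuous.subtype_mk
  apply continuous_pi
  intro n
  have : (fun μ : FiniteMeasure Xspace => μ (T n))
      = fun μ : FiniteMeasure Xspace => μ.testAgainstNN (indNN (isClopen_T n)) := by
    funext μ; rw [testAgainstNN_indNN]
  rw [this]
  exact FiniteMeasure.continuous_testAgainstNN_eval _

end XAux

namespace XAux

open scoped ENNReal NNReal BoundedContinuousFunction

variable {x : ℕ → ℝ≥0}

lemma coe_le_nndist (f : Xspace →ᵇ ℝ≥0) (ω : Xspace) : f ω ≤ nndist f 0 := by
  have h := BoundedContinuousFunction.nndist_coe_le_nndist (f := f) (g := 0) ω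
  simpa [NNReal.nndist_zero_eq_val'] using h

lemma lintegral_nu (hx : ∀ n, x (n + 1) ≤ x n) (f : Xspace →ᵇ ℝ≥0) :
    ∫⁻ ω, (f ω : ℝ≥0∞) ∂(nu x)
      = ∑' n, (dd x n : ℝ≥0∞) * (f (pt n) : ℝ≥0∞) + (Lim x : ℝ≥0∞) * (f zp : ℝ≥0∞) := by
  rw [nu, lintegral_add_measure, lintegral_sum_measure]
  simp only [lintegral_smul_measure, lintegral_dirac, smul_eq_mul]

lemma tsum_dd_mul_ne_top (hx : ∀ n, x (n + 1) ≤ x n) (f : Xspace →ᵇ ℝ≥0) :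
    ∑' n, (dd x n : ℝ≥0∞) * (f (pt n) : ℝ≥0∞) ≠ ∞ := by
  have hb : ∑' n, (dd x n : ℝ≥0∞) * (f (pt n) : ℝ≥0∞)
      ≤ ∑' n, (dd x n : ℝ≥0∞) * (nndist f 0 : ℝ≥0∞) := by
    apply ENNReal.tsum_le_tsum
    intro n
    exact mul_le_mul_of_nonneg_left (ENNReal.coe_le_coe.mpr (coe_le_nndist f (pt n))) (zero_le)
  rw [ENNReal.tsum_mul_right] at hb
  have := tsum_dd_ennreal hx 0
  simp only [Nat.zero_add, zero_add] at this
  rw [this] at hb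
  exact ne_top_of_le_ne_top (ENNReal.mul_ne_top ENNReal.coe_ne_top ENNReal.coe_ne_top) hb

lemma testAgainstNN_psi_eq (x : {x : ℕ → ℝ≥0 // ∀ n, x (n + 1) ≤ x n}) (f : Xspace →ᵇ ℝ≥0) :
    (((psi x).testAgainstNN f : ℝ≥0) : ℝ)
      = ∑' n, ((dd x.1 n : ℝ) * ((f (pt n) : ℝ≥0) : ℝ)) + (Lim x.1 : ℝ) * ((f zp : ℝ≥0) : ℝ) := by
  have hcoe : (psi x : Measure Xspace) = nu x.1 := rfl
  show ((∫⁻ ω, (f ω : ℝ≥0∞) ∂(psi x : Measure Xspace)).toNNReal : ℝ) = _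
  rw [hcoe, lintegral_nu x.2 f]
  have hA := tsum_dd_mul_ne_top x.2 f
  have hB : (Lim x.1 : ℝ≥0∞) * (f zp : ℝ≥0∞) ≠ ∞ := by simp [← ENNReal.coe_mul]
  show (∑' n, (dd x.1 n : ℝ≥0∞) * (f (pt n) : ℝ≥0∞) + (Lim x.1 : ℝ≥0∞) * (f zp : ℝ≥0∞)).toReal = _
  rw [ENNReal.toReal_add hA hB, ENNReal.toReal_mul,
    ENNReal.tsum_toReal_eq (fun n => ENNReal.mul_ne_top ENNReal.coe_ne_top ENNReal.coe_ne_top)]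
  simp [ENNReal.toReal_mul]

end XAux

namespace XAux

open scoped ENNReal NNReal BoundedContinuousFunction

section cont

variable (f : Xspace →ᵇ ℝ≥0)

/-- the cone of nonincreasing sequences -/
abbrev K := {x : ℕ → ℝ≥0 // ∀ n, x (n + 1) ≤ x n}

/-- values at the points -/
noncomputable def aseq (n : ℕ) : ℝ := ((f (pt n) : ℝ≥0) : ℝ)

/-- value at zero -/
noncomputable def bval : ℝ := ((f zp : ℝ≥0) : ℝ)

/-- the integral as a function of the sequence -/
noncomputable def Gfun (x : K) : ℝ :=
  ∑' n, (dd x.1 n : ℝ) * aseq f n + (Lim x.1 : ℝ) * bval f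

/-- finite approximations -/
noncomputable def Ffun (N : ℕ) (x : K) : ℝ :=
  ∑ n ∈ Finset.range N, (dd x.1 n : ℝ) * aseq f n + (x.1 N : ℝ) * bval f

variable (x : K)

lemma sum_dd_real (k N : ℕ) :
    ∑ m ∈ Finset.range N, (dd x.1 (k + m) : ℝ) = (x.1 k : ℝ) - (x.1 (k + N) : ℝ) := by
  have hle : x.1 (k + N) ≤ x.1 k := (anti x.2) (Nat.le_add_right k N)
  calc ∑ m ∈ Finset.range N, (dd x.1 (k + m) : ℝ)
      = ((∑ m ∈ Finset.range N, dd x.1 (k + m) : ℝ≥0) : ℝ) := by push_cast; rfl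
    _ = ((x.1 k - x.1 (k + N) : ℝ≥0) : ℝ) := by rw [sum_dd_range x.2 k N]
    _ = (x.1 k : ℝ) - (x.1 (k + N) : ℝ) := NNReal.coe_sub hle

lemma summable_dd : Summable fun n => (dd x.1 n : ℝ) := by
  apply summable_of_sum_range_le (c := (x.1 0 : ℝ)) (fun n => NNReal.coe_nonneg _)
  intro N
  have h := sum_dd_real x 0 N
  simp only [Nat.zero_add, zero_add] at h
  rw [h]
  have : (0:ℝ) ≤ x.1 N := NNReal.coe_nonneg _
  linarith

lemma summable_dd_a : Summable fun n => (dd x.1 n : ℝ) * aseq f n := by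
  apply Summable.of_norm_bounded ((summable_dd x).mul_right ((nndist f 0 : ℝ≥0) : ℝ))
  intro n
  rw [Real.norm_eq_abs, abs_mul, abs_of_nonneg (NNReal.coe_nonneg _)]
  apply mul_le_mul_of_nonneg_left _ (NNReal.coe_nonneg _)
  show |((f (pt n) : ℝ≥0) : ℝ)| ≤ ((nndist f 0 : ℝ≥0) : ℝ)
  rw [abs_of_nonneg (NNReal.coe_nonneg _)]
  exact_mod_cast coe_le_nndist f (pt n)

lemma tendsto_coord_Lim (N : ℕ) :
    Tendsto (fun M => (x.1 (N + M) : ℝ)) atTop (𝓝 ((Lim x.1 : ℝ))) := by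
  apply (NNReal.continuous_coe.tendsto _).comp
  exact (tendsto_Lim x.2).comp (tendsto_atTop_atTop_of_monotone (fun a b h => by omega)
    (fun b => ⟨b, Nat.le_add_left b N⟩))

lemma hasSum_tail (N : ℕ) :
    HasSum (fun m => (dd x.1 (m + N) : ℝ)) ((x.1 N : ℝ) - (Lim x.1 : ℝ)) := by
  have hsum : Summable fun m => (dd x.1 (m + N) : ℝ) :=
    (summable_nat_add_iff N).2 (summable_dd x)
  rw [hsum.hasSum_iff_tendsto_nat]
  have hps : ∀ M, ∑ m ∈ Finset.range M, (dd x.1 (m + N) : ℝ)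
      = (x.1 N : ℝ) - (x.1 (N + M) : ℝ) := by
    intro M
    rw [← sum_dd_real x N M]
    exact Finset.sum_congr rfl fun m _ => by rw [add_comm m N]
  simp_rw [hps]
  exact Tendsto.sub tendsto_const_nhds (tendsto_coord_Lim x N)

lemma Lim_coe_nonneg : (0:ℝ) ≤ (Lim x.1 : ℝ) := NNReal.coe_nonneg _

lemma est {N : ℕ} {δ : ℝ} (hδ : 0 ≤ δ) (ha : ∀ n, N ≤ n → |aseq f n - bval f| ≤ δ) :
    |Gfun f x - Ffun f N x| ≤ δ * (x.1 0 : ℝ) := by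
  have htail_a : Summable fun m => (dd x.1 (m + N) : ℝ) * aseq f (m + N) :=
    (summable_nat_add_iff N).2 (summable_dd_a f x)
  have htail_d : Summable fun m => (dd x.1 (m + N) : ℝ) := (hasSum_tail x N).summable
  have h1 : ∑' n, (dd x.1 n : ℝ) * aseq f n
      = ∑ n ∈ Finset.range N, (dd x.1 n : ℝ) * aseq f n
        + ∑' m, (dd x.1 (m + N) : ℝ) * aseq f (m + N) :=
    (Summable.sum_add_tsum_nat_add N (summable_dd_a f x)).symm
  have h2 : ∑' m, (dd x.1 (m + N) : ℝ) * bval f = ((x.1 N : ℝ) - (Lim x.1 : ℝ)) * bval f :=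
    ((hasSum_tail x N).mul_right _).tsum_eq
  have hsplit : Gfun f x - Ffun f N x
      = ∑' m, (dd x.1 (m + N) : ℝ) * (aseq f (m + N) - bval f) := by
    have h3 : ∑' m, (dd x.1 (m + N) : ℝ) * (aseq f (m + N) - bval f)
        = ∑' m, (dd x.1 (m + N) : ℝ) * aseq f (m + N)
          - ∑' m, (dd x.1 (m + N) : ℝ) * bval f := by
      rw [← Summable.tsum_sub htail_a (htail_d.mul_right _)]
      congr 1; funext m; ring
    rw [h3, h2, Gfun, Ffun, h1]
    ring
  rw [hsplit]
  have hbound : ∀ m, |(dd x.1 (m + N) : ℝ) * (aseq f (m + N) - bval f)|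
      ≤ (dd x.1 (m + N) : ℝ) * δ := by
    intro m
    rw [abs_mul, abs_of_nonneg (NNReal.coe_nonneg _)]
    exact mul_le_mul_of_nonneg_left (ha _ (Nat.le_add_left N m)) (NNReal.coe_nonneg _)
  calc |∑' m, (dd x.1 (m + N) : ℝ) * (aseq f (m + N) - bval f)|
      ≤ ∑' m, |(dd x.1 (m + N) : ℝ) * (aseq f (m + N) - bval f)| := by
        simp_rw [← Real.norm_eq_abs]
        apply norm_tsum_le_tsum_norm
        simp_rw [Real.norm_eq_abs]
        apply Summable.of_nonneg_of_le (fun m => abs_nonneg _) hbound (htail_d.mul_right δ)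
    _ ≤ ∑' m, (dd x.1 (m + N) : ℝ) * δ := by
        apply Summable.tsum_le_tsum hbound
          (Summable.of_nonneg_of_le (fun m => abs_nonneg _) hbound (htail_d.mul_right δ))
          (htail_d.mul_right δ)
    _ = ((x.1 N : ℝ) - (Lim x.1 : ℝ)) * δ := ((hasSum_tail x N).mul_right δ).tsum_eq
    _ ≤ (x.1 0 : ℝ) * δ := by
        have h4 : (x.1 N : ℝ) ≤ (x.1 0 : ℝ) := by exact_mod_cast (anti x.2) (Nat.zero_le N)
        have h5 := Lim_coe_nonneg x
        nlinarith
    _ = δ * (x.1 0 : ℝ) := mul_comm _ _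

end cont
end XAux

namespace XAux

open scoped ENNReal NNReal BoundedContinuousFunction

variable (f : Xspace →ᵇ ℝ≥0)

lemma continuous_coord (n : ℕ) : Continuous fun x : K => (x.1 n : ℝ) :=
  NNReal.continuous_coe.comp ((continuous_apply n).comp continuous_subtype_val)

lemma continuous_Ffun (N : ℕ) : Continuous (Ffun f N) := by
  apply Continuous.add _ ((continuous_coord N).mul continuous_const)
  apply continuous_finset_sum
  intro n _
  apply Continuous.mul _ continuous_const
  have : (fun x : K => (dd x.1 n : ℝ)) = fun x : K => (x.1 n : ℝ) - (x.1 (n+1) : ℝ) := by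
    funext x
    exact NNReal.coe_sub (x.2 n)
  rw [this]
  exact (continuous_coord n).sub (continuous_coord (n+1))

lemma tendsto_aseq : Tendsto (aseq f) atTop (𝓝 (bval f)) := by
  apply (NNReal.continuous_coe.tendsto _).comp
  exact (f.continuous.tendsto zp).comp tendsto_pt

lemma continuous_Gfun : Continuous (Gfun f) := by
  rw [continuous_iff_continuousAt]
  intro x0
  set C := (x0.1 0 : ℝ) + 1 with hC
  have hCpos : 0 < C := by have := NNReal.coe_nonneg (x0.1 0); simp [hC]; linarith
  set S := {x : K | (x.1 0 : ℝ) < C} with hS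
  have hS_open : IsOpen S := isOpen_lt (continuous_coord 0) continuous_const
  have hx0S : x0 ∈ S := by simp only [hS, Set.mem_setOf_eq, hC]; linarith
  have hunif : TendstoUniformlyOn (Ffun f) (Gfun f) atTop S := by
    rw [Metric.tendstoUniformlyOn_iff]
    intro ε hε
    have hδpos : 0 < ε / (2 * C) := by positivity
    obtain ⟨N0, hN0'⟩ := Metric.tendsto_atTop.mp (tendsto_aseq f) (ε / (2 * C)) hδpos
    have hN0 : ∀ n, N0 ≤ n → |aseq f n - bval f| ≤ ε / (2 * C) := fun n hn => by
      have := hN0' n hn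
      rw [Real.dist_eq] at this
      exact le_of_lt this
    filter_upwards [eventually_ge_atTop N0] with N hN x hxS
    have hest := est f x (le_of_lt hδpos) (fun n hn => hN0 n (le_trans hN hn))
    rw [Real.dist_eq]
    calc |Gfun f x - Ffun f N x| ≤ ε / (2 * C) * (x.1 0 : ℝ) := hest
      _ ≤ ε / (2 * C) * C := by
          apply mul_le_mul_of_nonneg_left (le_of_lt hxS) (le_of_lt hδpos)
      _ = ε / 2 := by field_simp
      _ < ε := by linarith
  exact (hunif.continuousOn (Filter.Eventually.of_forall fun N =>
    (continuous_Ffun f N).continuousOn).frequently).continuousAt (hS_open.mem_nhds hx0S)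

lemma continuous_test : Continuous fun x : K => (psi x).testAgainstNN f := by
  have hG : (fun x : K => (((psi x).testAgainstNN f : ℝ≥0) : ℝ)) = Gfun f := by
    funext x
    rw [testAgainstNN_psi_eq x f]
    rfl
  rw [NNReal.isEmbedding_coe.isInducing.continuous_iff]
  show Continuous fun x : K => (((psi x).testAgainstNN f : ℝ≥0) : ℝ)
  rw [hG]
  exact continuous_Gfun f

lemma continuous_psi : Continuous psi := by
  rw [show (psi : K → FiniteMeasure Xspace) = psi from rfl]
  apply continuous_induced_rng.2
  apply WeakBilin.continuous_of_continuous_eval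
  intro g
  exact continuous_test g

end XAux

namespace XAux

/-- the homeomorphism -/
noncomputable def homeo :
    FiniteMeasure Xspace ≃ₜ {x : ℕ → NNReal // ∀ n, x (n + 1) ≤ x n} :=
  { XAux.equiv with
    continuous_toFun := continuous_phi
    continuous_invFun := continuous_psi }

end XAux

open XAux in
/-- The cone of finite Borel measures on `{1/n : n ≥ 1} ∪ {0}` (with the weak-* topology)
is linearly homeomorphic to the closed subcone of `ℝ₊^ℕ` (with the product topology)
consisting of nonincreasing sequences. -/
theorem stmt2 :
    IsClosed {x : ℕ → NNReal | ∀ n, x (n + 1) ≤ x n} ∧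
    ∃ f : FiniteMeasure Xspace ≃ₜ {x : ℕ → NNReal // ∀ n, x (n + 1) ≤ x n},
      (∀ μ ν : FiniteMeasure Xspace, (f (μ + ν)).1 = (f μ).1 + (f ν).1) ∧
      (∀ (c : NNReal) (μ : FiniteMeasure Xspace), (f (c • μ)).1 = c • (f μ).1) := by
  constructor
  · have h : {x : ℕ → NNReal | ∀ n, x (n + 1) ≤ x n}
        = ⋂ n, {x : ℕ → NNReal | x (n + 1) ≤ x n} := by
      ext y; simp [Set.mem_iInter]
    rw [h]
    exact isClosed_iInter fun n => isClosed_le (continuous_apply (n + 1)) (continuous_apply n)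
  · refine ⟨homeo, ?_, ?_⟩
    · intro μ ν
      funext n
      show (μ + ν) (T n) = μ (T n) + ν (T n)
      rw [MeasureTheory.FiniteMeasure.coeFn_add]
      rfl
    · intro c μ
      funext n
      show (c • μ) (T n) = c • μ (T n)
      rw [MeasureTheory.FiniteMeasure.coeFn_smul]
      rfl
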